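/- Let f : A → B be an (n, m, S) zero-difference function with λ = max S, and suppose n ≥ mλ so that the preimage sets D_i = f^{-1}(b_i) form an (n, [w_0,...,w_{m-1}], n-λ) difference system of sets. Then this DSS is optimal (meets the bound n ≥ √SQUARE((n-λ)(n-1) + ⌈(n-λ)(n-1)/(m-1)⌉)) if and only if n ≥ mλ - m + 2. -/

import Mathlib

open Finset

/-- The smallest perfect square that is no less than `x`. -/
def squareAbove (x : ℕ) : ℕ := if x = 0 then 0 else (Nat.sqrt (x - 1) + 1) ^ 2

private lemma arith12 (n m lam : ℕ) (hn2 : 2 ≤ n) (hm2 : 2 ≤ m) (hml : m * lam ≤ n)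
    (hcount : n ^ 2 ≤ m * n + m * lam * (n - 1))
    (T : ℕ)
    (hT : T = (n - lam) * (n - 1)
        + (⌈((n : ℚ) - lam) * ((n : ℚ) - 1) / ((m : ℚ) - 1)⌉).toNat) :
    Nat.sqrt (squareAbove T) = n ↔ (m : ℤ) * lam - m + 2 ≤ n := by
  have hlamn : lam < n := by
    have h2 : 2 * lam ≤ m * lam := Nat.mul_le_mul_right lam hm2
    omega
  -- basic casts
  have hm1 : (0:ℚ) < (m:ℚ) - 1 := by
    have : (2:ℚ) ≤ (m:ℚ) := by exact_mod_cast hm2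
    linarith
  have hn1 : (0:ℚ) < (n:ℚ) - 1 := by
    have : (2:ℚ) ≤ (n:ℚ) := by exact_mod_cast hn2
    linarith
  set N : ℕ := (n - lam) * (n - 1) with hN
  have hNcast : (N : ℚ) = ((n:ℚ) - lam) * ((n:ℚ) - 1) := by
    rw [hN]
    push_cast [Nat.cast_sub hlamn.le, Nat.cast_sub (by omega : 1 ≤ n)]
    ring
  have hNpos : 0 < N := by
    have h1 : 1 ≤ n - lam := by omega
    have h2 : 1 ≤ n - 1 := by omega
    exact Nat.mul_le_mul h1 h2
  set c : ℤ := ⌈((n : ℚ) - lam) * ((n : ℚ) - 1) / ((m : ℚ) - 1)⌉ with hc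
  have hc1 : 1 ≤ c := by
    rw [hc, Int.le_ceil_iff, ← hNcast]
    have : (0:ℚ) < (N:ℚ) / ((m:ℚ) - 1) := div_pos (by exact_mod_cast hNpos) hm1
    push_cast
    linarith
  have hTval : T = N + c.toNat := hT
  have hTcast : (T : ℤ) = (N : ℤ) + c := by
    rw [hTval]
    push_cast [Int.toNat_of_nonneg (by omega : 0 ≤ c)]
    ring
  have hTpos : 0 < T := by
    have := Int.toNat_of_nonneg (by omega : 0 ≤ c)
    omega
  -- hcount in ℚ form: m * N ≤ (m-1) * n^2
  have hcQ : (m : ℚ) * N ≤ ((m:ℚ) - 1) * (n:ℚ)^2 := by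
    have h : (n:ℚ)^2 ≤ (m:ℚ)*n + (m:ℚ)*lam*((n:ℚ)-1) := by
      have := hcount
      have h1 : ((n - 1 : ℕ) : ℚ) = (n:ℚ) - 1 := by
        push_cast [Nat.cast_sub (by omega : 1 ≤ n)]; ring
      calc ((n:ℚ))^2 = ((n^2 : ℕ) : ℚ) := by push_cast; ring
        _ ≤ ((m * n + m * lam * (n-1) : ℕ) : ℚ) := by exact_mod_cast this
        _ = (m:ℚ)*n + (m:ℚ)*lam*((n:ℚ)-1) := by push_cast [h1]; ring
    rw [hNcast]
    nlinarith [h]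
  -- T ≤ n^2 always
  have hTle : T ≤ n ^ 2 := by
    have hcle : c ≤ (n:ℤ)^2 - N := by
      rw [hc, Int.ceil_le, ← hNcast]
      rw [div_le_iff₀ hm1]
      push_cast
      nlinarith [hcQ]
    have : (T:ℤ) ≤ (n:ℤ)^2 := by rw [hTcast]; omega
    exact_mod_cast this
  -- (n-1)^2 < T ↔ RHS
  have hNz : (N:ℤ) = ((n:ℤ) - lam) * ((n:ℤ) - 1) := by
    rw [hN]
    push_cast [Nat.cast_sub hlamn.le, Nat.cast_sub (show 1 ≤ n by omega)]
    ring
  have hn1z : (0:ℤ) < (n:ℤ) - 1 := by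
    have : (2:ℤ) ≤ (n:ℤ) := by exact_mod_cast hn2
    linarith
  have hiff : ((n:ℤ) - 1)^2 < (T:ℤ) ↔ (m : ℤ) * lam - m + 2 ≤ n := by
    rw [hTcast]
    have key : ((n:ℤ) - 1)^2 - (N:ℤ) < c ↔ (m : ℤ) * lam - m + 2 ≤ n := by
      rw [hc, Int.lt_ceil, ← hNcast, lt_div_iff₀ hm1]
      have hcastiff : (((((n:ℤ) - 1)^2 - (N:ℤ)) : ℤ) : ℚ) * ((m:ℚ) - 1) < (N:ℚ)
          ↔ (((n:ℤ) - 1)^2 - (N:ℤ)) * ((m:ℤ) - 1) < (N:ℤ) := by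
        constructor
        · intro h; exact_mod_cast h
        · intro h; exact_mod_cast h
      rw [hcastiff, hNz]
      constructor
      · intro h
        have h1 := Int.add_one_le_of_lt h
        nlinarith [h1, hn1z]
      · intro h
        nlinarith [h, hn1z, mul_pos hn1z (show (0:ℤ) < (n:ℤ) + m - m*lam - 1 by linarith)]
    constructor
    · intro h; exact key.mp (by linarith)
    · intro h; have := key.mpr h; linarith
  -- unfold squareAbove
  have hsq : Nat.sqrt (squareAbove T) = Nat.sqrt (T - 1) + 1 := by
    rw [squareAbove, if_neg (by omega : T ≠ 0), Nat.sqrt_eq']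
  rw [hsq, ← hiff]
  constructor
  · intro h
    have h1 : Nat.sqrt (T - 1) = n - 1 := by omega
    have h2 : (n-1)^2 ≤ T - 1 := by rw [← h1]; exact Nat.sqrt_le' _
    have : (n-1)^2 < T := by omega
    have hcast : ((n-1 : ℕ):ℤ) = (n:ℤ) - 1 := by
      push_cast [Nat.cast_sub (by omega : 1 ≤ n)]; ring
    calc ((n:ℤ) - 1)^2 = (((n-1)^2 : ℕ) : ℤ) := by rw [Nat.cast_pow, hcast]
      _ < (T:ℤ) := by exact_mod_cast this
  · intro h
    have h' : (((n-1)^2 : ℕ) : ℤ) < (T:ℤ) := by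
      have hcast : ((n-1 : ℕ):ℤ) = (n:ℤ) - 1 := by
        push_cast [Nat.cast_sub (by omega : 1 ≤ n)]; ring
      rw [Nat.cast_pow, hcast]; exact h
    have h1 : (n-1)^2 < T := by exact_mod_cast h'
    have hge : n - 1 ≤ Nat.sqrt (T - 1) := by
      rw [Nat.le_sqrt']
      omega
    have hlt : Nat.sqrt (T - 1) < n := by
      rw [Nat.sqrt_lt']
      omega
    omega

theorem stmt12 {A B : Type*} [AddCommGroup A] [Fintype A] [DecidableEq A]
    [Fintype B] [DecidableEq B] (f : A → B)
    (n m lam : ℕ) (hn : n = Fintype.card A) (hn2 : 2 ≤ n)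
    (hm : m = (univ.image f).card) (hm2 : 2 ≤ m)
    (hmax : ∀ α : A, α ≠ 0 → (univ.filter fun x => f (x + α) = f x).card ≤ lam)
    (hmem : ∃ α : A, α ≠ 0 ∧ (univ.filter fun x => f (x + α) = f x).card = lam)
    (hml : m * lam ≤ n)
    (T : ℕ)
    (hT : T = (n - lam) * (n - 1)
        + (⌈((n : ℚ) - lam) * ((n : ℚ) - 1) / ((m : ℚ) - 1)⌉).toNat) :
    Nat.sqrt (squareAbove T) = n ↔ (m : ℤ) * lam - m + 2 ≤ n := by
  classical
  set w : B → ℕ := fun b => (univ.filter fun x => f x = b).card with hw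
  -- total count: sum of fiber sizes is n
  have hsum_w : ∑ b ∈ univ.image f, w b = n := by
    rw [hn, ← Finset.card_univ]
    exact (Finset.card_eq_sum_card_fiberwise
      (fun a _ => Finset.mem_image_of_mem f (Finset.mem_univ a))).symm
  -- step 1: sum over x of w (f x) equals sum of squares of fibers
  have hstep1 : ∑ x : A, w (f x) = ∑ b ∈ univ.image f, w b * w b := by
    rw [Finset.sum_comp w f]
    refine Finset.sum_congr rfl fun b _ => ?_
    rw [smul_eq_mul]
  -- step 2: swap counting
  have hstep2 : ∑ α : A, ((univ.filter fun x => f (x + α) = f x).card)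
      = ∑ x : A, w (f x) := by
    simp only [Finset.card_filter]
    rw [Finset.sum_comm]
    refine Finset.sum_congr rfl fun x _ => ?_
    rw [hw]
    simp only [Finset.card_filter]
    exact Fintype.sum_equiv (Equiv.addLeft x) _ _ (fun α => by simp; congr)
  -- bound on the total pair count
  have hbound : ∑ α : A, ((univ.filter fun x => f (x + α) = f x).card)
      ≤ n + (n - 1) * lam := by
    rw [← Finset.add_sum_erase _ _ (Finset.mem_univ (0:A))]
    have h0 : (univ.filter fun x => f (x + (0:A)) = f x).card = n := by
      simp [hn]
    have herase : ∑ α ∈ univ.erase (0:A),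
        ((univ.filter fun x => f (x + α) = f x).card) ≤ (n - 1) * lam := by
      calc ∑ α ∈ univ.erase (0:A), ((univ.filter fun x => f (x + α) = f x).card)
          ≤ ∑ _α ∈ univ.erase (0:A), lam :=
            Finset.sum_le_sum fun α hα => hmax α (Finset.ne_of_mem_erase hα)
        _ = (n - 1) * lam := by
            rw [Finset.sum_const, Finset.card_erase_of_mem (Finset.mem_univ _),
              Finset.card_univ, ← hn, smul_eq_mul]
    omega
  -- Cauchy-Schwarz
  have hcount : n ^ 2 ≤ m * n + m * lam * (n - 1) := by
    have hcs : (∑ b ∈ univ.image f, w b) ^ 2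
        ≤ (univ.image f).card * ∑ b ∈ univ.image f, (w b) ^ 2 :=
      sq_sum_le_card_mul_sum_sq
    rw [hsum_w, ← hm] at hcs
    have hsq : ∑ b ∈ univ.image f, (w b) ^ 2 = ∑ b ∈ univ.image f, w b * w b := by
      refine Finset.sum_congr rfl fun b _ => ?_; ring
    rw [hsq, ← hstep1, ← hstep2] at hcs
    calc n ^ 2 ≤ m * (n + (n - 1) * lam) :=
          hcs.trans (Nat.mul_le_mul_left m hbound)
      _ = m * n + m * lam * (n - 1) := by ring
  exact arith12 n m lam hn2 hm2 hml hcount T hT
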